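/- Let $p$ be an odd prime and $G$ the non-abelian group of order $p^3$ and exponent $p$. If a sequence $W$ over $G$ of length $p^3 + 3p - 3$ has at least $p^3 + p - 1$ terms lying in the center $Z(G)$, then $W$ has a product-one subsequence of length exactly $p^3$. -/

import Mathlib

/-- Iterated Erdős–Ginzburg–Ziv: extract `k+1` disjoint zero-sum blocks of size `p`. -/
lemma egz_iter (p : ℕ) (k : ℕ) (s : Multiset (ZMod p))
    (hs : k * p + (2 * p - 1) ≤ Multiset.card s) :
    ∃ t ≤ s, Multiset.card t = (k + 1) * p ∧ t.sum = 0 := by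
  induction k with
  | zero =>
    obtain ⟨t, hts, htc, hsum⟩ := ZMod.erdos_ginzburg_ziv_multiset s (by omega)
    exact ⟨t, hts, by omega, hsum⟩
  | succ k ih =>
    obtain ⟨t, hts, htc, hsum⟩ := ih (by
      have : k * p ≤ (k + 1) * p := Nat.mul_le_mul_right p (by omega)
      omega)
    have hcards : Multiset.card (s - t) = Multiset.card s - (k + 1) * p := by
      rw [Multiset.card_sub hts, htc]
    obtain ⟨u, hus, huc, husum⟩ := ZMod.erdos_ginzburg_ziv_multiset (s - t) (by
      rw [hcards]
      have := Multiset.card_le_card hts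
      omega)
    refine ⟨t + u, ?_, by simp [htc, huc]; ring, by simp [hsum, husum]⟩
    calc t + u ≤ t + (s - t) := add_le_add (le_refl t) hus
    _ = s := add_tsub_cancel_of_le hts

theorem stmt_12 (p : ℕ) (hp : p.Prime) (hodd : Odd p)
    {G : Type*} [Group G] [Fintype G]
    (hcard : Fintype.card G = p ^ 3)
    (hexp : Monoid.exponent G = p)
    (hna : ∃ a b : G, a * b ≠ b * a)
    (W : Multiset G) (hlen : Multiset.card W = p ^ 3 + 3 * p - 3)
    (hcen : ∃ Z : Multiset G, Z ≤ W ∧ p ^ 3 + p - 1 ≤ Multiset.card Z ∧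
      ∀ z ∈ Z, z ∈ Subgroup.center G) :
    ∃ l : List G, (l : Multiset G) ≤ W ∧ l.length = p ^ 3 ∧ l.prod = 1 := by
  classical
  haveI : Fact p.Prime := ⟨hp⟩
  have hp1 : 1 < p := hp.one_lt
  obtain ⟨Z, hZW, hZcard, hZcen⟩ := hcen
  -- the center has cardinality p
  have hcardN : Nat.card G = p ^ 3 := by rw [Nat.card_eq_fintype_card, hcard]
  have hpg : IsPGroup p G := IsPGroup.of_card hcardN
  obtain ⟨k, hk0, hk⟩ := IsPGroup.card_center_eq_prime_pow hcardN (by norm_num)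
  have hdvd : Nat.card (Subgroup.center G) ∣ Nat.card G :=
    Subgroup.card_subgroup_dvd_card _
  rw [hk, hcardN] at hdvd
  have hk3 : k ≤ 3 := (Nat.pow_dvd_pow_iff_le_right hp1).mp hdvd
  have hk1 : k = 1 := by
    rcases Nat.lt_or_ge k 2 with h | h
    · omega
    · exfalso
      obtain ⟨a, b, hab⟩ := hna
      rcases Nat.lt_or_ge k 3 with h2 | h2
      · -- k = 2 : quotient has order p, cyclic, so G abelian
        have hk2 : k = 2 := by omega
        have hmul := Subgroup.card_eq_card_quotient_mul_card_subgroup (Subgroup.center G)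
        rw [hcardN, hk, hk2] at hmul
        have hq : Nat.card (G ⧸ Subgroup.center G) = p := by
          have hp0 : 0 < p := hp.pos
          have : Nat.card (G ⧸ Subgroup.center G) * p ^ 2 = p * p ^ 2 := by
            rw [← hmul]; ring
          exact Nat.eq_of_mul_eq_mul_right (by positivity) this
        haveI : IsCyclic (G ⧸ Subgroup.center G) := isCyclic_of_prime_card hq
        exact hab (commutative_of_cyclic_center_quotient (QuotientGroup.mk' _)
          (QuotientGroup.ker_mk' _).le a b)
      · -- k = 3 : center is everything
        have hk3' : k = 3 := by omega
        have htop : Subgroup.center G = ⊤ :=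
          Subgroup.eq_top_of_card_eq _ (by rw [hk, hk3', hcardN])
        have ha : a ∈ Subgroup.center G := htop ▸ Subgroup.mem_top a
        exact hab ((Subgroup.mem_center_iff.mp ha b).symm)
  have hZp : Nat.card (Subgroup.center G) = p := by rw [hk, hk1, pow_one]
  haveI : IsCyclic (Subgroup.center G) := isCyclic_of_prime_card hZp
  -- the isomorphism with ZMod p
  have e : Multiplicative (ZMod p) ≃* Subgroup.center G :=
    hZp ▸ zmodCyclicMulEquiv inferInstance
  -- lift Z to a multiset over the center
  set sZ : Multiset (Subgroup.center G) :=
    Z.attach.map (fun x => (⟨x.1, hZcen x.1 x.2⟩ : Subgroup.center G)) with hsZ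
  have hsZval : sZ.map Subtype.val = Z := by
    rw [hsZ, Multiset.map_map]
    exact Multiset.attach_map_val Z
  have hsZcard : Multiset.card sZ = Multiset.card Z := by
    rw [hsZ]; simp
  -- push to ZMod p
  set φ : Subgroup.center G → ZMod p := fun z => Multiplicative.toAdd (e.symm z) with hφ
  set ψ : ZMod p → Subgroup.center G := fun a => e (Multiplicative.ofAdd a) with hψ
  have hψφ : ∀ z, ψ (φ z) = z := by intro z; simp [hφ, hψ]
  set s0 : Multiset (ZMod p) := sZ.map φ with hs0
  have hs0card : Multiset.card s0 = Multiset.card Z := by rw [hs0, Multiset.card_map, hsZcard]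
  -- extract p^2 disjoint zero-sum blocks of size p
  have h2 : 1 ≤ p ^ 2 := Nat.one_le_pow _ _ hp.pos
  have hpp3 : p ≤ p ^ 3 := Nat.le_self_pow (by norm_num) p
  have key : (p ^ 2 - 1) * p + p = p ^ 3 := by
    have h1 : (p ^ 2 - 1) * p = p ^ 2 * p - p := by rw [Nat.sub_mul, one_mul]
    have h3 : p ^ 2 * p = p ^ 3 := by ring
    omega
  obtain ⟨t0, ht0s, ht0card, ht0sum⟩ := egz_iter p (p ^ 2 - 1) s0 (by
    rw [hs0card]
    omega)
  have ht0card' : Multiset.card t0 = p ^ 3 := by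
    rw [ht0card]
    have : (p ^ 2 - 1 + 1) * p = (p ^ 2 - 1) * p + p := by ring
    omega
  -- pull back
  set t : Multiset (Subgroup.center G) := t0.map ψ with ht
  have hts : t ≤ sZ := by
    have := Multiset.map_le_map (f := ψ) ht0s
    rwa [hs0, Multiset.map_map, (by funext z; exact hψφ z : ψ ∘ φ = id),
      Multiset.map_id] at this
  have htcard : Multiset.card t = p ^ 3 := by rw [ht, Multiset.card_map, ht0card']
  letI : CommGroup (Subgroup.center G) := { mul_comm := mul_comm' }
  have htprod : t.prod = 1 := by
    have h1 : Multiset.map ψ t0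
        = Multiset.map (⇑e) (Multiset.map (⇑Multiplicative.ofAdd) t0) := by
      rw [Multiset.map_map]; rfl
    rw [ht, h1, Multiset.prod_hom _ e, ← ofAdd_multiset_prod, ht0sum]
    simp
  -- assemble the list
  refine ⟨t.toList.map Subtype.val, ?_, ?_, ?_⟩
  · have : ((t.toList.map Subtype.val : List G) : Multiset G) = t.map Subtype.val := by
      rw [← Multiset.map_coe, Multiset.coe_toList]
    rw [this]
    calc t.map Subtype.val ≤ sZ.map Subtype.val := Multiset.map_le_map hts
    _ = Z := hsZval
    _ ≤ W := hZW
  · rw [List.length_map, Multiset.length_toList, htcard]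
  · rw [show (Subtype.val : Subgroup.center G → G) = ⇑(Subgroup.center G).subtype from rfl,
      List.prod_hom, Multiset.prod_toList, htprod]
    simp
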